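/- Let m ≥ 2 be an integer and define λ_m(n) = ∑_{d : d^m ∣ n} μ(n/d^m). Then the partial sums ∑_{n ≤ x} μ(n)/n tend to 0 as x → ∞ if and only if the partial sums ∑_{n ≤ x} λ_m(n)/n tend to 0 as x → ∞. -/

import Mathlib

open Finset ArithmeticFunction Filter

/-- `lambdaM m n = ∑_{d : d^m ∣ n} μ(n / d^m)`. -/
def lambdaM (m n : ℕ) : ℤ :=
  ∑ d ∈ n.divisors.filter (fun d => d ^ m ∣ n), moebius (n / d ^ m)

namespace LambdaMAux

noncomputable def M (x : ℕ) : ℝ := ∑ n ∈ Finset.Icc 1 x, (moebius n : ℝ) / n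
noncomputable def L (m x : ℕ) : ℝ := ∑ n ∈ Finset.Icc 1 x, (lambdaM m n : ℝ) / n

lemma M_zero : M 0 = 0 := by simp [M]
lemma L_zero (m : ℕ) : L m 0 = 0 := by simp [L]

lemma sum_pair (m : ℕ) (hm : 1 ≤ m) (x : ℕ) (F : ℕ → ℕ → ℝ) :
    ∑ d ∈ Icc 1 x, ∑ k ∈ Icc 1 (x / d ^ m), F d k =
      ∑ p ∈ (Icc 1 x ×ˢ Icc 1 x).filter (fun p => p.1 ^ m * p.2 ≤ x), F p.1 p.2 := by
  rw [Finset.sum_filter, Finset.sum_product]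
  refine Finset.sum_congr rfl fun d hd => ?_
  rw [← Finset.sum_filter]
  have hd1 : 1 ≤ d := (Finset.mem_Icc.1 hd).1
  have hdm : 0 < d ^ m := pow_pos hd1 _
  refine (Finset.sum_congr ?_ (fun _ _ => rfl)).symm
  ext k
  simp only [Finset.mem_filter, Finset.mem_Icc]
  constructor
  · rintro ⟨⟨h1, _⟩, h3⟩
    refine ⟨h1, (Nat.le_div_iff_mul_le hdm).2 ?_⟩
    rwa [mul_comm]
  · rintro ⟨h1, h2⟩
    have h3 := (Nat.le_div_iff_mul_le hdm).1 h2
    exact ⟨⟨h1, le_trans h2 (Nat.div_le_self _ _)⟩, by rwa [mul_comm] at h3⟩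

lemma fiber_eq (m : ℕ) (hm : 1 ≤ m) (x n : ℕ) (hn : n ∈ Icc 1 x) :
    (lambdaM m n : ℝ) / n =
      ∑ p ∈ ((Icc 1 x ×ˢ Icc 1 x).filter (fun p => p.1 ^ m * p.2 ≤ x)).filter
        (fun p => p.1 ^ m * p.2 = n), (moebius p.2 : ℝ) / ((p.1 : ℝ) ^ m * p.2) := by
  obtain ⟨hn1, hnx⟩ := Finset.mem_Icc.1 hn
  rw [lambdaM, Int.cast_sum, Finset.sum_div]
  refine Finset.sum_nbij' (fun d => (d, n / d ^ m)) (fun p => p.1) ?_ ?_ ?_ ?_ ?_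
  · intro d hd
    simp only [Finset.mem_filter, Nat.mem_divisors] at hd
    obtain ⟨⟨hdn, hn0⟩, hdm⟩ := hd
    have hd1 : 1 ≤ d := Nat.pos_of_dvd_of_pos hdn hn1
    have hdmn : d ^ m ≤ n := Nat.le_of_dvd hn1 hdm
    have hq1 : 1 ≤ n / d ^ m := Nat.one_le_div_iff (pow_pos hd1 _) |>.2 hdmn
    have hmul : d ^ m * (n / d ^ m) = n := Nat.mul_div_cancel' hdm
    simp only [Finset.mem_filter, Finset.mem_product, Finset.mem_Icc]
    refine ⟨⟨⟨⟨hd1, le_trans (Nat.le_of_dvd hn1 hdn) hnx⟩,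
      ⟨hq1, le_trans (Nat.div_le_self _ _) hnx⟩⟩, ?_⟩, hmul⟩
    rw [hmul]; exact hnx
  · intro p hp
    simp only [Finset.mem_filter, Finset.mem_product, Finset.mem_Icc] at hp
    obtain ⟨⟨⟨⟨h11, _⟩, _⟩, _⟩, heq⟩ := hp
    have hdvd : p.1 ^ m ∣ n := ⟨p.2, heq.symm⟩
    have hp1n : p.1 ∣ n := dvd_trans (dvd_pow_self p.1 (by omega)) hdvd
    simp only [Finset.mem_filter, Nat.mem_divisors]
    exact ⟨⟨hp1n, by omega⟩, hdvd⟩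
  · intro d hd
    simp only [Finset.mem_filter, Nat.mem_divisors] at hd
    rfl
  · intro p hp
    simp only [Finset.mem_filter, Finset.mem_product, Finset.mem_Icc] at hp
    obtain ⟨⟨⟨⟨h11, _⟩, _⟩, _⟩, heq⟩ := hp
    have : n / p.1 ^ m = p.2 := by
      rw [← heq]; exact Nat.mul_div_cancel_left _ (pow_pos h11 _)
    simp [this]
  · intro d hd
    simp only [Finset.mem_filter, Nat.mem_divisors] at hd
    obtain ⟨⟨hdn, hn0⟩, hdm⟩ := hd
    have hd1 : 1 ≤ d := Nat.pos_of_dvd_of_pos hdn hn1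
    have hcast : ((n / d ^ m : ℕ) : ℝ) = (n : ℝ) / (d : ℝ) ^ m := by
      rw [Nat.cast_div hdm (by positivity)]
      push_cast
      ring
    rw [hcast]
    have hd0 : ((d : ℝ)) ^ m ≠ 0 := by positivity
    rw [mul_div_cancel₀ _ hd0]

lemma L_eq (m : ℕ) (hm : 1 ≤ m) (x : ℕ) :
    L m x = ∑ d ∈ Icc 1 x, (1 / (d : ℝ) ^ m) * M (x / d ^ m) := by
  have step : ∑ d ∈ Icc 1 x, (1 / (d : ℝ) ^ m) * M (x / d ^ m)
      = ∑ d ∈ Icc 1 x, ∑ k ∈ Icc 1 (x / d ^ m), (moebius k : ℝ) / ((d : ℝ) ^ m * k) := by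
    refine Finset.sum_congr rfl fun d hd => ?_
    rw [M, Finset.mul_sum]
    exact Finset.sum_congr rfl fun k _ => by ring
  rw [step, sum_pair m hm x]
  rw [← Finset.sum_fiberwise_of_maps_to (g := fun p : ℕ × ℕ => p.1 ^ m * p.2)
    (t := Icc 1 x) ?_ (fun p => (moebius p.2 : ℝ) / ((p.1 : ℝ) ^ m * p.2))]
  · exact Finset.sum_congr rfl fun n hn => fiber_eq m hm x n hn
  · intro p hp
    simp only [Finset.mem_filter, Finset.mem_product, Finset.mem_Icc] at hp ⊢
    obtain ⟨⟨⟨h11, _⟩, ⟨h21, _⟩⟩, hle⟩ := hp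
    exact ⟨Nat.one_le_iff_ne_zero.2 (by positivity), hle⟩

lemma M_eq (m : ℕ) (hm : 1 ≤ m) (x : ℕ) :
    M x = ∑ d ∈ Icc 1 x, ((moebius d : ℝ) / (d : ℝ) ^ m) * L m (x / d ^ m) := by
  rcases Nat.eq_zero_or_pos x with rfl | hx
  · simp [M]
  have step1 : ∑ d ∈ Icc 1 x, ((moebius d : ℝ) / (d : ℝ) ^ m) * L m (x / d ^ m)
      = ∑ d ∈ Icc 1 x, ∑ e ∈ Icc 1 (x / d ^ m),
          ((moebius d : ℝ) / ((d : ℝ) ^ m * (e : ℝ) ^ m)) * M (x / (d * e) ^ m) := by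
    refine Finset.sum_congr rfl fun d hd => ?_
    rw [L_eq m hm, Finset.mul_sum]
    refine Finset.sum_congr rfl fun e he => ?_
    rw [Nat.div_div_eq_div_mul, ← mul_pow]
    ring
  rw [step1, sum_pair m hm x]
  rw [← Finset.sum_fiberwise_of_maps_to (g := fun p : ℕ × ℕ => p.1 * p.2)
    (t := Icc 1 x) ?_ (fun p => ((moebius p.1 : ℝ) / ((p.1 : ℝ) ^ m * (p.2 : ℝ) ^ m)) * M (x / (p.1 * p.2) ^ m))]
  · have key : ∀ n ∈ Icc 1 x,
        (∑ p ∈ ((Icc 1 x ×ˢ Icc 1 x).filter (fun p => p.1 ^ m * p.2 ≤ x)).filter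
          (fun p => p.1 * p.2 = n),
          ((moebius p.1 : ℝ) / ((p.1 : ℝ) ^ m * (p.2 : ℝ) ^ m)) * M (x / (p.1 * p.2) ^ m))
        = if n = 1 then M x else 0 := by
      intro n hn
      obtain ⟨hn1, hnx⟩ := Finset.mem_Icc.1 hn
      by_cases hnm : n ^ m ≤ x
      · -- full fiber: all divisor pairs
        have fib : (∑ p ∈ ((Icc 1 x ×ˢ Icc 1 x).filter (fun p => p.1 ^ m * p.2 ≤ x)).filter
            (fun p => p.1 * p.2 = n),
            ((moebius p.1 : ℝ) / ((p.1 : ℝ) ^ m * (p.2 : ℝ) ^ m)) * M (x / (p.1 * p.2) ^ m))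
            = ∑ d ∈ n.divisors, (moebius d : ℝ) * (M (x / n ^ m) / (n : ℝ) ^ m) := by
          refine Finset.sum_nbij' (fun p => p.1) (fun d => (d, n / d)) ?_ ?_ ?_ ?_ ?_
          · intro p hp
            simp only [Finset.mem_filter, Finset.mem_product, Finset.mem_Icc] at hp
            obtain ⟨⟨_, _⟩, heq⟩ := hp
            exact Nat.mem_divisors.2 ⟨⟨p.2, heq.symm⟩, by omega⟩
          · intro d hd
            obtain ⟨hdn, hn0⟩ := Nat.mem_divisors.1 hd
            have hd1 : 1 ≤ d := Nat.pos_of_dvd_of_pos hdn hn1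
            have hq1 : 1 ≤ n / d := Nat.one_le_div_iff hd1 |>.2 (Nat.le_of_dvd hn1 hdn)
            have hmul : d * (n / d) = n := Nat.mul_div_cancel' hdn
            simp only [Finset.mem_filter, Finset.mem_product, Finset.mem_Icc]
            refine ⟨⟨⟨⟨hd1, le_trans (Nat.le_of_dvd hn1 hdn) hnx⟩,
              ⟨hq1, le_trans (Nat.div_le_self _ _) hnx⟩⟩, ?_⟩, hmul⟩
            calc d ^ m * (n / d) ≤ d ^ m * (n / d) ^ m := by
                  exact Nat.mul_le_mul_left _ (Nat.le_self_pow (by omega) _)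
              _ = (d * (n / d)) ^ m := (mul_pow _ _ _).symm
              _ = n ^ m := by rw [hmul]
              _ ≤ x := hnm
          · intro p hp
            simp only [Finset.mem_filter, Finset.mem_product, Finset.mem_Icc] at hp
            obtain ⟨⟨⟨⟨h11, _⟩, _⟩, _⟩, heq⟩ := hp
            have : n / p.1 = p.2 := by
              rw [← heq]; exact Nat.mul_div_cancel_left _ h11
            simp [this]
          · intro d hd
            rfl
          · intro p hp
            simp only [Finset.mem_filter, Finset.mem_product, Finset.mem_Icc] at hp
            obtain ⟨⟨⟨⟨h11, _⟩, ⟨h21, _⟩⟩, _⟩, heq⟩ := hp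
            rw [heq]
            have : ((p.1 : ℝ)) ^ m * (p.2 : ℝ) ^ m = (n : ℝ) ^ m := by
              rw [← mul_pow, ← Nat.cast_mul, heq]
            rw [this]
            ring
        rw [fib, ← Finset.sum_mul]
        have hmu : (∑ d ∈ n.divisors, (moebius d : ℝ)) = if n = 1 then 1 else 0 := by
          have : (∑ d ∈ n.divisors, moebius d) = if n = 1 then 1 else 0 := by
            rw [← coe_mul_zeta_apply, moebius_mul_coe_zeta, one_apply]
          rw [← Int.cast_sum, this]
          split <;> simp
        rw [hmu]
        split
        · next h =>
          subst h
          simp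
        · ring
      · -- fiber contributes 0
        have hzero : ∀ p ∈ ((Icc 1 x ×ˢ Icc 1 x).filter (fun p => p.1 ^ m * p.2 ≤ x)).filter
            (fun p => p.1 * p.2 = n),
            ((moebius p.1 : ℝ) / ((p.1 : ℝ) ^ m * (p.2 : ℝ) ^ m)) * M (x / (p.1 * p.2) ^ m) = 0 := by
          intro p hp
          simp only [Finset.mem_filter, Finset.mem_product, Finset.mem_Icc] at hp
          obtain ⟨_, heq⟩ := hp
          rw [heq]
          have : x / n ^ m = 0 := Nat.div_eq_of_lt (by omega)
          rw [this, M_zero, mul_zero]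
        rw [Finset.sum_eq_zero hzero]
        have : n ≠ 1 := by
          rintro rfl
          simp at hnm
          omega
        simp [this]
    rw [Finset.sum_congr rfl key, Finset.sum_ite_eq' (Icc 1 x) 1 (fun _ => M x)]
    have h1x : (1:ℕ) ∈ Icc 1 x := Finset.mem_Icc.2 ⟨le_refl _, hx⟩
    simp [h1x]
  · intro p hp
    simp only [Finset.mem_filter, Finset.mem_product, Finset.mem_Icc] at hp ⊢
    obtain ⟨⟨⟨h11, _⟩, ⟨h21, _⟩⟩, hle⟩ := hp
    refine ⟨Nat.one_le_iff_ne_zero.2 (by positivity), le_trans ?_ hle⟩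
    exact Nat.mul_le_mul_right _ (Nat.le_self_pow (by omega) _)

lemma key_tendsto (m : ℕ) (hm : 1 ≤ m) (c : ℕ → ℝ) (hc : Summable fun d => |c d|)
    (f : ℕ → ℝ) (hf0 : f 0 = 0) (hf : Tendsto f atTop (nhds 0)) :
    Tendsto (fun x : ℕ => ∑ d ∈ Icc 1 x, c d * f (x / d ^ m)) atTop (nhds 0) := by
  obtain ⟨B, hB⟩ : ∃ B : ℝ, ∀ y, |f y| ≤ B := by
    obtain ⟨Y, hY⟩ := Metric.tendsto_atTop.1 hf 1 one_pos
    refine ⟨1 + ∑ y ∈ Finset.range (Y + 1), |f y|, fun y => ?_⟩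
    have hsum : (0:ℝ) ≤ ∑ y ∈ Finset.range (Y + 1), |f y| :=
      Finset.sum_nonneg fun _ _ => abs_nonneg _
    rcases le_or_gt y Y with h | h
    · have hle : |f y| ≤ ∑ y ∈ Finset.range (Y + 1), |f y| :=
        Finset.single_le_sum (f := fun y => |f y|) (fun _ _ => abs_nonneg _) (Finset.mem_range.2 (Nat.lt_succ_of_le h))
      linarith
    · have := hY y h.le
      rw [Real.dist_eq, sub_zero] at this
      linarith
  set c' : ℕ → ℝ := fun d => if d = 0 then 0 else c d with hc'def
  have hc' : Summable fun d => |c' d| * B := by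
    refine Summable.mul_right B ?_
    refine Summable.of_nonneg_of_le (fun d => abs_nonneg _) (fun d => ?_) hc
    by_cases h : d = 0 <;> simp [hc'def, h, abs_nonneg]
  have hsum : ∀ x : ℕ, ∑ d ∈ Icc 1 x, c d * f (x / d ^ m) = ∑' d, c' d * f (x / d ^ m) := by
    intro x
    rw [tsum_eq_sum (s := Icc 1 x) ?_]
    · refine Finset.sum_congr rfl fun d hd => ?_
      have : d ≠ 0 := by
        have := (Finset.mem_Icc.1 hd).1; omega
      simp [hc'def, this]
    · intro d hd
      rcases Nat.eq_zero_or_pos d with rfl | hd1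
      · simp [hc'def]
      · have hdx : x < d := by
          by_contra h; push_neg at h; exact hd (Finset.mem_Icc.2 ⟨hd1, h⟩)
        have h0 : x / d ^ m = 0 :=
          Nat.div_eq_of_lt (lt_of_lt_of_le hdx (Nat.le_self_pow (by omega) d))
        simp [h0, hf0]
  have main : Tendsto (fun x : ℕ => ∑' d, c' d * f (x / d ^ m)) atTop (nhds 0) := by
    have := tendsto_tsum_of_dominated_convergence (𝓕 := (atTop : Filter ℕ))
      (f := fun x d => c' d * f (x / d ^ m)) (g := fun _ => (0:ℝ))
      (bound := fun d => |c' d| * B) hc' ?_ ?_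
    · simpa using this
    · intro d
      rcases Nat.eq_zero_or_pos d with rfl | hd1
      · simpa [hc'def] using tendsto_const_nhds
      · have hdiv : Tendsto (fun x : ℕ => x / d ^ m) atTop atTop := by
          refine tendsto_atTop_atTop.2 fun N => ⟨N * d ^ m, fun x hx => ?_⟩
          exact (Nat.le_div_iff_mul_le (pow_pos hd1 _)).2 hx
        have := (hf.comp hdiv).const_mul (c' d)
        simpa using this
    · refine Filter.Eventually.of_forall fun x d => ?_
      rw [Real.norm_eq_abs, abs_mul]
      exact mul_le_mul_of_nonneg_left (hB _) (abs_nonneg _)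
  exact main.congr fun x => (hsum x).symm

end LambdaMAux

open LambdaMAux
theorem moebius_sum_tendsto_zero_iff_lambdaM (m : ℕ) (hm : 2 ≤ m) :
    Tendsto (fun x : ℕ => ∑ n ∈ Finset.Icc 1 x, (moebius n : ℝ) / n) atTop (nhds 0) ↔
      Tendsto (fun x : ℕ => ∑ n ∈ Finset.Icc 1 x, (lambdaM m n : ℝ) / n) atTop (nhds 0) := by
  have hm1 : 1 ≤ m := by omega
  have hsum1 : Summable fun d : ℕ => |1 / (d : ℝ) ^ m| :=
    (Real.summable_one_div_nat_pow.2 (by omega)).abs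
  constructor
  · intro h
    have hM : Tendsto M atTop (nhds 0) := h
    have := key_tendsto m hm1 (fun d => 1 / (d : ℝ) ^ m) hsum1 M M_zero hM
    exact this.congr fun x => (L_eq m hm1 x).symm
  · intro h
    have hL : Tendsto (L m) atTop (nhds 0) := h
    have hsum2 : Summable fun d : ℕ => |(moebius d : ℝ) / (d : ℝ) ^ m| := by
      refine Summable.of_nonneg_of_le (fun d => abs_nonneg _) (fun d => ?_)
        ((Real.summable_one_div_nat_pow (p := m)).2 (by omega))
      rcases Nat.eq_zero_or_pos d with rfl | hd
      · simp
      · rw [abs_div, abs_pow, Nat.abs_cast]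
        have h1 : |(moebius d : ℝ)| ≤ 1 := by
          rw [← Int.cast_abs]
          exact_mod_cast abs_moebius_le_one
        gcongr
    have := key_tendsto m hm1 (fun d => (moebius d : ℝ) / (d : ℝ) ^ m) hsum2 (L m) (L_zero m) hL
    exact this.congr fun x => (M_eq m hm1 x).symm
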